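/- If G is a connected graph with maximum degree Δ ∈ {1, 2, n−1} (n the order of G), then F_c(G) ≤ γ_c(G)·(Δ − 2) + 2. -/

import Mathlib

open SimpleGraph

variable {V : Type*}

/-- One step of the (zero) forcing process: a colored vertex with exactly one
uncolored neighbor forces that neighbor to become colored. -/
def zfStep (G : SimpleGraph V) (S : Set V) : Set V :=
  S ∪ {w | ∃ v ∈ S, G.neighborSet v \ S = {w}}

/-- `S` is a forcing set if iterating the forcing process colors all vertices. -/
def IsForcingSet (G : SimpleGraph V) (S : Set V) : Prop :=
  ∃ n : ℕ, (zfStep G)^[n] S = Set.univ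

/-- A connected forcing set: a forcing set inducing a connected subgraph. -/
def IsConnForcingSet (G : SimpleGraph V) (S : Set V) : Prop :=
  IsForcingSet G S ∧ (G.induce S).Connected

/-- The forcing number `F(G)`. -/
noncomputable def forcingNumber (G : SimpleGraph V) : ℕ :=
  sInf (Set.ncard '' {S : Set V | IsForcingSet G S})

/-- The connected forcing number `F_c(G)`. -/
noncomputable def connForcingNumber (G : SimpleGraph V) : ℕ :=
  sInf (Set.ncard '' {S : Set V | IsConnForcingSet G S})

/-- A connected dominating set: every vertex outside `D` has a neighbor in `D`,
and `D` induces a connected subgraph. -/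
def IsConnDomSet (G : SimpleGraph V) (D : Set V) : Prop :=
  (∀ v ∉ D, ∃ u ∈ D, G.Adj u v) ∧ (G.induce D).Connected

/-- The connected domination number `γ_c(G)`. -/
noncomputable def connDomNumber (G : SimpleGraph V) : ℕ :=
  sInf (Set.ncard '' {D : Set V | IsConnDomSet G D})
lemma zf_subset (G : SimpleGraph V) (S : Set V) : S ⊆ zfStep G S := Set.subset_union_left

lemma zf_univ (G : SimpleGraph V) : zfStep G (Set.univ : Set V) = Set.univ := by
  apply Set.eq_univ_of_univ_subset; exact zf_subset G _

lemma boundary_edge {G : SimpleGraph V} {S : Set V} :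
    ∀ {a b : V}, G.Walk a b → a ∈ S → b ∉ S → ∃ v ∈ S, ∃ w, w ∉ S ∧ G.Adj v w := by
  intro a b p
  induction p with
  | nil => intro h h'; exact absurd h h'
  | cons h p ih =>
    rename_i u c d
    intro ha hb
    by_cases hc : c ∈ S
    · exact ih hc hb
    · exact ⟨u, ha, c, hc, h⟩

lemma neighbor_inside {G : SimpleGraph V} {S : Set V}
    (hc : (G.induce S).Connected) (h2 : 1 < S.ncard) {v : V} (hv : v ∈ S) :
    ∃ u ∈ S, G.Adj v u := by
  obtain ⟨x, hx, hxv⟩ := Set.exists_ne_of_one_lt_ncard h2 v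
  obtain ⟨p⟩ := hc.preconnected ⟨v, hv⟩ ⟨x, hx⟩
  cases p with
  | nil => exact absurd rfl hxv
  | cons h p => exact ⟨_, (Subtype.mem _), h⟩

lemma attach_connected {G : SimpleGraph V} {S : Set V}
    (hS : (G.induce S).Connected) (T : Set V) (hT : T.Finite) :
    (∀ w ∈ T, ∃ v ∈ S, G.Adj v w) → (G.induce (S ∪ T)).Connected := by
  refine Set.Finite.induction_on
    (motive := fun T _ => (∀ w ∈ T, ∃ v ∈ S, G.Adj v w) → (G.induce (S ∪ T)).Connected)
    T hT (by intro _; rw [Set.union_empty]; exact hS) ?_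
  intro a T ha hfin ih h
  obtain ⟨v, hv, hadj⟩ := h a (Set.mem_insert _ _)
  have hc := ih (fun w hw => h w (Set.mem_insert_of_mem _ hw))
  have key := induce_union_connected hc.preconnected (induce_pair_connected_of_adj hadj).preconnected
    ⟨v, Or.inl hv, Or.inl rfl⟩
  have : (S ∪ T) ∪ {v, a} = S ∪ insert a T := by
    ext y
    simp only [Set.mem_union, Set.mem_insert_iff, Set.mem_singleton_iff]
    constructor
    · rintro ((hy | hy) | (rfl | rfl))
      · exact Or.inl hy
      · exact Or.inr (Or.inr hy)
      · exact Or.inl hv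
      · exact Or.inr (Or.inl rfl)
    · rintro (hy | (rfl | hy))
      · exact Or.inl (Or.inl hy)
      · exact Or.inr (Or.inr rfl)
      · exact Or.inl (Or.inr hy)
  rwa [this] at key
lemma step_new {V : Type*} [Fintype V] {G : SimpleGraph V} [DecidableRel G.Adj]
    (hG : G.Connected) (hdeg : ∀ v, G.degree v ≤ 2) {S : Set V}
    (hc : (G.induce S).Connected) (h2 : 1 < S.ncard) (hne : S ≠ Set.univ) :
    ∃ w, w ∉ S ∧ w ∈ zfStep G S := by
  classical
  obtain ⟨b, hb⟩ : ∃ b, b ∉ S := by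
    by_contra h; push_neg at h; exact hne (Set.eq_univ_of_forall h)
  obtain ⟨a, ha, -⟩ := Set.exists_ne_of_one_lt_ncard h2 b
  obtain ⟨p⟩ := hG.preconnected a b
  obtain ⟨v, hv, w, hw, hadj⟩ := boundary_edge p ha hb
  obtain ⟨u, hu, hadju⟩ := neighbor_inside hc h2 hv
  have heq : G.neighborSet v \ S = {w} := by
    apply Set.eq_singleton_iff_unique_mem.mpr
    refine ⟨⟨hadj, hw⟩, ?_⟩
    rintro w' ⟨hw'1, hw'2⟩
    by_contra hne'
    have hsub : ({u, w, w'} : Finset V) ⊆ G.neighborFinset v := by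
      intro y hy
      simp only [Finset.mem_insert, Finset.mem_singleton] at hy
      rw [SimpleGraph.mem_neighborFinset]
      rcases hy with rfl | rfl | rfl
      · exact hadju
      · exact hadj
      · exact hw'1
    have h3 : ({u, w, w'} : Finset V).card = 3 := by
      rw [Finset.card_insert_of_notMem (by
          simp only [Finset.mem_insert, Finset.mem_singleton]
          rintro (rfl | rfl)
          · exact hw hu
          · exact hw'2 hu),
        Finset.card_insert_of_notMem (by simpa using fun h => hne' h.symm),
        Finset.card_singleton]
    have hcard : 3 ≤ (G.neighborFinset v).card := h3 ▸ Finset.card_le_card hsub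
    have := hdeg v
    rw [SimpleGraph.degree] at this
    omega
  exact ⟨w, hw, Or.inr ⟨v, hv, heq⟩⟩

lemma zf_attached {V : Type*} {G : SimpleGraph V} {S : Set V} :
    ∀ w ∈ {w | ∃ v ∈ S, G.neighborSet v \ S = {w}}, ∃ v ∈ S, G.Adj v w := by
  rintro w ⟨v, hv, heq⟩
  have : w ∈ G.neighborSet v \ S := heq ▸ rfl
  exact ⟨v, hv, this.1⟩

lemma P_pres {V : Type*} [Fintype V] {G : SimpleGraph V} {S : Set V}
    (hc : (G.induce S).Connected) :
    (G.induce (zfStep G S)).Connected :=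
  attach_connected hc _ (Set.toFinite _) zf_attached

lemma iter_univ {V : Type*} [Fintype V] {G : SimpleGraph V} [DecidableRel G.Adj]
    (hG : G.Connected) (hdeg : ∀ v, G.degree v ≤ 2) :
    ∀ (k : ℕ) (S : Set V), (G.induce S).Connected → 1 < S.ncard →
      Fintype.card V ≤ k + S.ncard → (zfStep G)^[k] S = Set.univ := by
  intro k
  induction k with
  | zero =>
    intro S hc h2 hcard
    simp only [Function.iterate_zero, id_eq]
    apply Set.eq_of_subset_of_ncard_le (Set.subset_univ _)
    rw [Set.ncard_univ, Nat.card_eq_fintype_card]; omega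
  | succ k ih =>
    intro S hc h2 hcard
    by_cases hS : S = Set.univ
    · subst hS; exact Function.iterate_fixed (zf_univ G) _
    · rw [Function.iterate_succ_apply]
      obtain ⟨w, hw, hwmem⟩ := step_new hG hdeg hc h2 hS
      have hlt : S.ncard < (zfStep G S).ncard :=
        Set.ncard_lt_ncard ⟨zf_subset G S, fun h => hw (h hwmem)⟩ (Set.toFinite _)
      exact ih _ (P_pres hc) (by omega) (by omega)
/-- If `G` is a connected graph with maximum degree `Δ ∈ {1, 2, n-1}` (`n` the
order of `G`), then `F_c(G) ≤ γ_c(G)(Δ - 2) + 2`. -/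
theorem connForcingNumber_le_connDomNumber_special {V : Type*} [Fintype V]
    (G : SimpleGraph V) [DecidableRel G.Adj] (hG : G.Connected)
    (hΔ : G.maxDegree = 1 ∨ G.maxDegree = 2 ∨ G.maxDegree = Fintype.card V - 1) :
    connForcingNumber G ≤ connDomNumber G * (G.maxDegree - 2) + 2 := by
  classical
  have hne : Nonempty V := hG.nonempty
  have key : ∀ S : Set V, IsConnForcingSet G S → connForcingNumber G ≤ S.ncard :=
    fun S h => Nat.sInf_le ⟨S, h, rfl⟩
  -- Case A : max degree 1 or 2
  have caseA : G.maxDegree = 1 ∨ G.maxDegree = 2 → connForcingNumber G ≤ 2 := by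
    intro h12
    have hdeg : ∀ v, G.degree v ≤ 2 := fun v => by
      have := G.degree_le_maxDegree v; omega
    obtain ⟨u, hu⟩ := G.exists_maximal_degree_vertex
    have hupos : 0 < G.degree u := by omega
    obtain ⟨w, hw⟩ := G.degree_pos_iff_exists_adj u |>.mp hupos
    have hcard2 : ({u, w} : Set V).ncard = 2 := Set.ncard_pair hw.ne
    have hforce : IsForcingSet G {u, w} :=
      ⟨Fintype.card V, iter_univ hG hdeg _ _ (induce_pair_connected_of_adj hw)
        (by omega) (by omega)⟩
    exact hcard2 ▸ key _ ⟨hforce, induce_pair_connected_of_adj hw⟩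
  rcases hΔ with h1 | h2 | h3
  · exact le_trans (caseA (Or.inl h1)) (by omega)
  · exact le_trans (caseA (Or.inr h2)) (by omega)
  · by_cases hn1 : Fintype.card V ≤ 1
    · -- single vertex
      have hsub : Subsingleton V := Fintype.card_le_one_iff_subsingleton.mp hn1
      have hconn : (G.induce (Set.univ : Set V)).Connected := by
        haveI : Nonempty ↑(Set.univ : Set V) := ⟨⟨Classical.arbitrary V, trivial⟩⟩
        exact ⟨fun a b => by rw [Subsingleton.elim a b]⟩
      have hforce : IsForcingSet G (Set.univ : Set V) := ⟨0, rfl⟩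
      have := key _ ⟨hforce, hconn⟩
      have hcard : (Set.univ : Set V).ncard = Fintype.card V := by
        rw [Set.ncard_univ, Nat.card_eq_fintype_card]
      omega
    · push_neg at hn1
      by_cases h12 : G.maxDegree ≤ 2
      · have hΔpos : 1 ≤ G.maxDegree := by omega
        exact le_trans (caseA (by omega)) (by omega)
      · -- max degree = n - 1 ≥ 3, so n ≥ 4
        push_neg at h12
        set n := Fintype.card V with hn
        have hn4 : 4 ≤ n := by omega
        obtain ⟨v, hvdeg⟩ := G.exists_maximal_degree_vertex
        -- v is universal
        have hNv : G.neighborFinset v = Finset.univ.erase v := by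
          apply Finset.eq_of_subset_of_card_le
          · intro y hy
            rw [SimpleGraph.mem_neighborFinset] at hy
            exact Finset.mem_erase.mpr ⟨hy.ne', Finset.mem_univ y⟩
          · rw [Finset.card_erase_of_mem (Finset.mem_univ v), Finset.card_univ]
            have : (G.neighborFinset v).card = G.degree v := rfl
            omega
        have huniv : ∀ w, w ≠ v → G.Adj v w := by
          intro w hwv
          rw [← SimpleGraph.mem_neighborFinset, hNv]
          exact Finset.mem_erase.mpr ⟨hwv, Finset.mem_univ w⟩
        have : Nontrivial V := Fintype.one_lt_card_iff_nontrivial.mp (by omega)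
        obtain ⟨x, hxv⟩ := exists_ne v
        set S : Set V := Set.univ \ {x} with hS
        have hvS : v ∈ S := ⟨trivial, fun h => hxv (h ▸ rfl)⟩
        -- S is a forcing set in one step
        have hstep : zfStep G S = Set.univ := by
          apply Set.eq_univ_of_univ_subset
          intro y _
          by_cases hy : y = x
          · subst hy
            refine Or.inr ⟨v, hvS, ?_⟩
            ext z
            simp only [Set.mem_diff, SimpleGraph.mem_neighborSet, Set.mem_singleton_iff,
              hS, Set.mem_univ, true_and, not_not]
            constructor
            · rintro ⟨-, rfl⟩; rfl
            · rintro rfl; exact ⟨(huniv _ hxv), rfl⟩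
          · exact Or.inl ⟨trivial, hy⟩
        have hforce : IsForcingSet G S := ⟨1, by simpa using hstep⟩
        -- S is connected (via universal vertex v)
        have hconnS : (G.induce S).Connected := by
          have hav : ∀ a : ↑S, (G.induce S).Reachable a ⟨v, hvS⟩ := by
            intro a
            by_cases hva : (a : V) = v
            · have : a = (⟨v, hvS⟩ : ↑S) := Subtype.ext hva
              rw [this]
            · exact SimpleGraph.Adj.reachable (by exact (huniv a hva).symm)
          haveI : Nonempty ↑S := ⟨⟨v, hvS⟩⟩
          exact ⟨fun a b => (hav a).trans (hav b).symm⟩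
        have hcardS : S.ncard = n - 1 := by
          rw [hS, Set.ncard_diff_singleton_of_mem (Set.mem_univ x),
            Set.ncard_univ, Nat.card_eq_fintype_card]
        have hFc : connForcingNumber G ≤ n - 1 := hcardS ▸ key S ⟨hforce, hconnS⟩
        -- γ_c ≥ 1
        have hdomv : IsConnDomSet G {v} := by
          constructor
          · intro w hw
            exact ⟨v, rfl, huniv w (fun h => hw (h ▸ rfl))⟩
          · haveI : Nonempty ↑({v} : Set V) := ⟨⟨v, rfl⟩⟩
            exact ⟨fun a b => by rw [Subtype.ext (a.2.trans b.2.symm : (a:V) = b)]⟩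
        have hmem : connDomNumber G ∈ Set.ncard '' {D : Set V | IsConnDomSet G D} :=
          Nat.sInf_mem ⟨1, {v}, hdomv, Set.ncard_singleton v⟩
        obtain ⟨D, hD, hDcard⟩ := hmem
        have hDne : D.Nonempty := Set.nonempty_coe_sort.mp hD.2.nonempty
        have hγ : 1 ≤ connDomNumber G := by
          have := (Set.ncard_pos (Set.toFinite D)).mpr hDne
          omega
        have hmul : n - 3 ≤ connDomNumber G * (G.maxDegree - 2) := by
          calc n - 3 = 1 * (G.maxDegree - 2) := by rw [one_mul, h3]; omega
          _ ≤ connDomNumber G * (G.maxDegree - 2) := Nat.mul_le_mul_right _ hγ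
        omega
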